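/- Let G be a group acting on a Polish space X that is σ-compact, second countable, and has no isolated points, via an action α all of whose orbits are dense and with α(g,·) continuous for each g. Then cov_α = cov*_α, where cov_α is the least cardinality of a set Q ⊆ G such that α(Q,C) = X for some closed nowhere dense C ⊆ X, and cov*_α is the analogous cardinal with C replaced by a meagre set. -/

import Mathlib

open Set Topology Cardinal
open Metric

section Aux
set_option linter.unusedSectionVars false
variable {G X : Type*} [Group G] [TopologicalSpace X] (α : G → X → X)

lemma nwd_mono {s t : Set X} (h : t ⊆ s) (hs : IsNowhereDense s) : IsNowhereDense t := by
  have hsub : interior (closure t) ⊆ interior (closure s) :=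
    interior_mono (closure_mono h)
  rw [IsNowhereDense] at hs ⊢
  exact subset_empty_iff.1 (hs ▸ hsub)

lemma nwd_image (e : X ≃ₜ X) {s : Set X} (hs : IsNowhereDense s) :
    IsNowhereDense (e '' s) := by
  rw [IsNowhereDense, ← e.image_closure, ← e.image_interior, hs, image_empty]

lemma nwd_meagre {s : Set X} (hs : IsNowhereDense s) : IsMeagre s := by
  rw [isMeagre_iff_countable_union_isNowhereDense]
  exact ⟨{s}, by simpa using hs, countable_singleton s, by simp⟩

lemma meagre_image (e : X ≃ₜ X) {s : Set X} (hs : IsMeagre s) : IsMeagre (e '' s) := by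
  rw [isMeagre_iff_countable_union_isNowhereDense] at hs ⊢
  obtain ⟨S, hnwd, hcnt, hsub⟩ := hs
  refine ⟨(e '' ·) '' S, ?_, hcnt.image _, ?_⟩
  · rintro t ⟨u, hu, rfl⟩; exact nwd_image e (hnwd u hu)
  · rintro x ⟨y, hy, rfl⟩
    obtain ⟨u, hu, hyu⟩ := hsub hy
    exact ⟨e '' u, ⟨u, hu, rfl⟩, ⟨y, hyu, rfl⟩⟩

lemma meagre_biUnion {Q : Set G} (hQ : Q.Countable) {f : G → Set X}
    (hf : ∀ q ∈ Q, IsMeagre (f q)) : IsMeagre (⋃ q ∈ Q, f q) := by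
  rw [IsMeagre, compl_iUnion₂]
  exact (countable_bInter_mem hQ).2 hf

lemma singleton_nwd (hni : ∀ x : X, ¬ IsOpen ({x} : Set X)) [T1Space X] (x : X) :
    IsNowhereDense ({x} : Set X) := by
  rw [isClosed_singleton.isNowhereDense_iff, eq_empty_iff_forall_notMem]
  intro y hy
  have h2 : interior ({x} : Set X) = {x} := by
    refine subset_antisymm interior_subset (singleton_subset_iff.2 ?_)
    have hyx : y ∈ ({x} : Set X) := interior_subset hy
    rw [mem_singleton_iff] at hyx
    rwa [hyx] at hy
  exact hni x (h2 ▸ isOpen_interior)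

/-- each `α g` as a homeomorphism -/
def actHomeo (hone : ∀ x, α 1 x = x) (hmul : ∀ g h x, α (g * h) x = α g (α h x))
    (hcont : ∀ g, Continuous (α g)) (g : G) : X ≃ₜ X where
  toFun := α g
  invFun := α g⁻¹
  left_inv x := by rw [← hmul, inv_mul_cancel, hone]
  right_inv x := by rw [← hmul, mul_inv_cancel, hone]
  continuous_toFun := hcont g
  continuous_invFun := hcont g⁻¹

lemma exists_finset_orbit (hcont : ∀ g, Continuous (α g))
    (horb : ∀ x : X, Dense (Set.range fun g => α g x))
    {K V : Set X} (hK : IsCompact K) (hV : IsOpen V) (hVne : V.Nonempty) :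
    ∃ t : Finset G, ∀ x ∈ K, ∃ g ∈ t, α g x ∈ V := by
  have hcover : K ⊆ ⋃ g : G, (α g) ⁻¹' V := by
    intro x _
    obtain ⟨y, ⟨g, rfl⟩, hy⟩ := (horb x).exists_mem_open hV hVne
    exact mem_iUnion.2 ⟨g, hy⟩
  obtain ⟨t, ht⟩ := hK.elim_finite_subcover (fun g : G => (α g) ⁻¹' V)
    (fun g => hV.preimage (hcont g)) hcover
  exact ⟨t, fun x hx => by simpa using ht hx⟩

end Aux

/-- Key lemma: every meagre set is covered by countably many `α`-translates of a single
closed nowhere dense set. -/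
lemma key_lemma {G X : Type*} [Group G] [MetricSpace X] [CompleteSpace X]
    [SigmaCompactSpace X] [Nonempty X]
    (hni : ∀ x : X, ¬ IsOpen ({x} : Set X))
    (α : G → X → X)
    (hone : ∀ x, α 1 x = x)
    (hmul : ∀ g h x, α (g * h) x = α g (α h x))
    (hcont : ∀ g, Continuous (α g))
    (horb : ∀ x : X, Dense (Set.range fun g => α g x))
    {M : Set X} (hM : IsMeagre M) :
    ∃ (C : Set X) (T : Set G), T.Countable ∧ IsClosed C ∧ IsNowhereDense C ∧
      M ⊆ ⋃ g ∈ T, α g '' C := by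
  obtain ⟨S, hSnwd, hScnt, hMS⟩ := isMeagre_iff_countable_union_isNowhereDense.1 hM
  rcases S.eq_empty_or_nonempty with rfl | hSne
  · refine ⟨∅, ∅, countable_empty, isClosed_empty, isNowhereDense_empty, ?_⟩
    intro x hx; simpa using hMS hx
  obtain ⟨f, rfl⟩ := hScnt.exists_eq_range hSne
  set p : X := Classical.arbitrary X with hp
  set e : ℕ ≃ ℕ × ℕ := (Denumerable.eqv (ℕ × ℕ)).symm with he
  set KK : ℕ → Set X := fun j => closure (f (e j).1) ∩ compactCovering X (e j).2 with hKK
  have hKcomp : ∀ j, IsCompact (KK j) :=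
    fun j => (isCompact_compactCovering X _).inter_left isClosed_closure
  have hKnwd : ∀ j, IsNowhereDense (KK j) :=
    fun j => nwd_mono inter_subset_left ((hSnwd _ (mem_range_self _)).closure)
  have hrad : ∀ j : ℕ, (0:ℝ) < 1 / (j + 1) := fun j => by positivity
  set V : ℕ → Set X := fun j => ball p (1 / (j + 1)) with hV
  choose t ht using fun j =>
    exists_finset_orbit α hcont horb (hKcomp j) isOpen_ball ⟨p, mem_ball_self (hrad j)⟩
  set D : ℕ → Set X := fun j => ⋃ g ∈ t j, (α g '' KK j ∩ closure (V j)) with hD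
  have hDclosed : ∀ j, IsClosed (D j) := fun j =>
    Set.Finite.isClosed_biUnion (t j).finite_toSet fun g _ =>
      (((hKcomp j).image (hcont g)).isClosed).inter isClosed_closure
  have hDsub : ∀ j, D j ⊆ closedBall p (1 / (j + 1)) := fun j =>
    iUnion₂_subset fun g _ => inter_subset_right.trans closure_ball_subset_closedBall
  set C : Set X := {p} ∪ ⋃ j, D j with hC
  have hCclosed : IsClosed C := by
    rw [← isOpen_compl_iff, isOpen_iff_forall_mem_open]
    intro x hx
    have hxp : x ≠ p := fun h => hx (Or.inl (by simp [h]))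
    have hxD : ∀ j, x ∉ D j := fun j hj => hx (Or.inr (mem_iUnion.2 ⟨j, hj⟩))
    have hδ : 0 < dist x p := dist_pos.2 hxp
    obtain ⟨N, hN⟩ := exists_nat_one_div_lt (by linarith : (0:ℝ) < dist x p / 2)
    refine ⟨ball x (dist x p / 2) ∩ ⋂ j ∈ Finset.range N, (D j)ᶜ, ?_, ?_, ?_⟩
    · rintro y ⟨hyb, hyD⟩
      simp only [Finset.mem_range, mem_iInter, mem_compl_iff] at hyD
      rw [mem_ball] at hyb
      rintro (hy | hy)
      · rw [mem_singleton_iff] at hy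
        subst hy
        rw [dist_comm] at hyb; linarith
      · obtain ⟨j, hj⟩ := mem_iUnion.1 hy
        rcases lt_or_ge j N with hjN | hjN
        · exact hyD j hjN hj
        · have h1 : dist y p ≤ 1 / (j + 1) := mem_closedBall.1 (hDsub j hj)
          have h2 : (1:ℝ) / (j + 1) ≤ 1 / (N + 1) := by
            apply one_div_le_one_div_of_le (by positivity)
            exact_mod_cast by omega
          have h3 : dist x p ≤ dist x y + dist y p := dist_triangle x y p
          rw [dist_comm x y] at h3
          linarith
    · exact isOpen_ball.inter (isOpen_biInter_finset fun j _ => (hDclosed j).isOpen_compl)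
    · exact ⟨mem_ball_self (by linarith), by
        simp only [Finset.mem_range, mem_iInter, mem_compl_iff]
        exact fun j _ => hxD j⟩
  have hCmeagre : IsMeagre C := by
    have h1 : IsMeagre ({p} : Set X) := nwd_meagre (singleton_nwd hni p)
    have h2 : IsMeagre (⋃ j, D j) := by
      refine isMeagre_iUnion fun j => ?_
      refine meagre_biUnion (t j).finite_toSet.countable fun g _ => ?_
      refine nwd_meagre (nwd_mono inter_subset_left ?_)
      exact nwd_image (actHomeo α hone hmul hcont g) (hKnwd j)
    rw [IsMeagre, hC, compl_union]
    exact Filter.inter_mem h1 h2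
  have hCnwd : IsNowhereDense C := by
    rw [IsNowhereDense, hCclosed.closure_eq]
    exact interior_eq_empty_iff_dense_compl.2 (dense_of_mem_residual hCmeagre)
  refine ⟨C, ⋃ j, (fun g : G => g⁻¹) '' (t j : Set G),
    countable_iUnion fun j => ((t j).finite_toSet.image _).countable,
    hCclosed, hCnwd, ?_⟩
  intro x hx
  obtain ⟨s, hs, hxs⟩ := hMS hx
  obtain ⟨n, rfl⟩ := hs
  have hxcl : x ∈ closure (f n) := subset_closure hxs
  have : x ∈ ⋃ m, compactCovering X m := by rw [iUnion_compactCovering]; trivial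
  obtain ⟨m, hm⟩ := mem_iUnion.1 this
  set j : ℕ := e.symm (n, m) with hj
  have hxK : x ∈ KK j := by
    rw [hKK]; simp only [hj, Equiv.apply_symm_apply]
    exact ⟨hxcl, hm⟩
  obtain ⟨g, hg, hgx⟩ := ht j x hxK
  have hmem : α g x ∈ D j := by
    rw [hD]
    exact mem_iUnion₂.2 ⟨g, hg, mem_image_of_mem _ hxK, subset_closure hgx⟩
  have hCmem : α g x ∈ C := Or.inr (mem_iUnion.2 ⟨j, hmem⟩)
  have hxeq : α g⁻¹ (α g x) = x := by rw [← hmul, inv_mul_cancel, hone]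
  refine mem_iUnion₂.2 ⟨g⁻¹, ?_, α g x, hCmem, hxeq⟩
  exact mem_iUnion.2 ⟨j, mem_image_of_mem _ hg⟩


/-- `cov_α`: the least cardinality of a set `Q ⊆ G` such that the `Q`-translates of some
closed nowhere dense set `C ⊆ X` cover `X`. -/
noncomputable def covAction {G X : Type*} [TopologicalSpace X] (α : G → X → X) : Cardinal :=
  sInf {κ | ∃ (Q : Set G) (C : Set X), κ = #Q ∧ IsClosed C ∧ IsNowhereDense C ∧
    (⋃ q ∈ Q, α q '' C) = Set.univ}

/-- `cov*_α`: the least cardinality of a set `Q ⊆ G` such that the `Q`-translates of some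
meagre set `M ⊆ X` cover `X`. -/
noncomputable def covActionStar {G X : Type*} [TopologicalSpace X] (α : G → X → X) : Cardinal :=
  sInf {κ | ∃ (Q : Set G) (M : Set X), κ = #Q ∧ IsMeagre M ∧
    (⋃ q ∈ Q, α q '' M) = Set.univ}

/-- for a group action on a σ-compact, second countable Polish space
with no isolated points, all orbits dense and each `α g` continuous,
`cov_α = cov*_α`. -/
theorem covAction_eq_covActionStar
    {G X : Type*} [Group G] [TopologicalSpace X] [PolishSpace X]
    [SigmaCompactSpace X] [SecondCountableTopology X]
    (hni : ∀ x : X, ¬ IsOpen ({x} : Set X))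
    (α : G → X → X)
    (hone : ∀ x, α 1 x = x)
    (hmul : ∀ g h x, α (g * h) x = α g (α h x))
    (hcont : ∀ g, Continuous (α g))
    (horb : ∀ x : X, Dense (Set.range fun g => α g x)) :
    covAction α = covActionStar α := by
  letI := TopologicalSpace.upgradeIsCompletelyMetrizable X
  set A : Set Cardinal := {κ | ∃ (Q : Set G) (C : Set X), κ = #Q ∧ IsClosed C ∧
    IsNowhereDense C ∧ (⋃ q ∈ Q, α q '' C) = Set.univ} with hA
  set B : Set Cardinal := {κ | ∃ (Q : Set G) (M : Set X), κ = #Q ∧ IsMeagre M ∧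
    (⋃ q ∈ Q, α q '' M) = Set.univ} with hB
  have hsub : A ⊆ B := by
    rintro κ ⟨Q, C, rfl, _, hnwd, hcov⟩
    exact ⟨Q, C, rfl, nwd_meagre hnwd, hcov⟩
  have hmain : ∀ κ ∈ B, ∃ κ' ∈ A, κ' ≤ κ := by
    rintro κ ⟨Q, M, rfl, hMmea, hcover⟩
    by_cases hX : Nonempty X
    · -- Q is infinite
      have hQinf : ℵ₀ ≤ #Q := by
        by_contra h
        push_neg at h
        have hQc : Q.Countable := (Cardinal.lt_aleph0_iff_set_finite.1 h).countable
        have hmea : IsMeagre (⋃ q ∈ Q, α q '' M) :=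
          meagre_biUnion hQc fun q _ =>
            meagre_image (actHomeo α hone hmul hcont q) hMmea
        rw [hcover] at hmea
        have hdense : Dense ((Set.univ : Set X)ᶜ) := dense_of_mem_residual hmea
        rw [compl_univ] at hdense
        exact Set.not_nonempty_empty hdense.nonempty
      obtain ⟨C, T, hTc, hCcl, hCnwd, hMsub⟩ :=
        key_lemma hni α hone hmul hcont horb hMmea
      set Q' : Set G := Set.image2 (fun q g => q * g) Q T with hQ'
      have hcov' : (⋃ q ∈ Q', α q '' C) = Set.univ := by
        refine subset_antisymm (subset_univ _) ?_
        intro x _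
        have hx : x ∈ ⋃ q ∈ Q, α q '' M := by rw [hcover]; trivial
        obtain ⟨q, hq, y, hyM, rfl⟩ := by simpa using hx
        obtain ⟨g, hg, c, hcC, rfl⟩ := by simpa using hMsub hyM
        exact mem_iUnion₂.2 ⟨q * g, mem_image2_of_mem hq hg, c, hcC, hmul q g c⟩
      have hcard : #Q' ≤ #Q := by
        calc #Q' ≤ #Q * #T := Cardinal.mk_image2_le
        _ ≤ #Q * ℵ₀ := mul_le_mul_right (Cardinal.mk_le_aleph0_iff.2 hTc.to_subtype) _
        _ = #Q := Cardinal.mul_aleph0_eq hQinf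
      exact ⟨#Q', ⟨Q', C, rfl, hCcl, hCnwd, hcov'⟩, hcard⟩
    · haveI : IsEmpty X := not_nonempty_iff.1 hX
      refine ⟨#Q, ⟨Q, ∅, rfl, isClosed_empty, isNowhereDense_empty, ?_⟩, le_rfl⟩
      rw [Set.univ_eq_empty_iff.2 ‹IsEmpty X›]
      simp
  show sInf A = sInf B
  rcases B.eq_empty_or_nonempty with hBe | hBne
  · have hAe : A = ∅ := subset_empty_iff.1 (hBe ▸ hsub)
    rw [hAe, hBe]
  · have hAne : A.Nonempty := by
      obtain ⟨κ, hκ⟩ := hBne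
      obtain ⟨κ', hκ', _⟩ := hmain κ hκ
      exact ⟨κ', hκ'⟩
    refine le_antisymm ?_ (csInf_le_csInf (OrderBot.bddBelow _) hAne hsub)
    refine le_csInf hBne fun κ hκ => ?_
    obtain ⟨κ', hκ'A, hle⟩ := hmain κ hκ
    exact le_trans (csInf_le (OrderBot.bddBelow _) hκ'A) hle
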